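/- Let f be a monic irreducible polynomial with integer coefficients of degree n ≥ 2, let N = f(1), let ℓ be a prime number, and let π ∈ ℂ be a root of f. Then the complex number N/(ℓ·(1−π)) is integral over ℤ if and only if ℓ divides f'(1) and ℓ² divides N. -/

import Mathlib

open Polynomial

lemma coeff_sum_CXpow {R} [Semiring R] (n : ℕ) (b : ℕ → R) {j : ℕ} (hj : j ≤ n) :
    (∑ k ∈ Finset.range (n+1), C (b k) * X^(n-k)).coeff (n-j) = b j := by
  rw [finset_sum_coeff, Finset.sum_eq_single j]
  · simp
  · intro k hk hkj
    rw [coeff_C_mul, coeff_X_pow, if_neg (by simp at hk; omega), mul_zero]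
  · intro h; exact absurd (Finset.mem_range.mpr (by omega)) h

lemma natDegree_sum_CXpow {R} [Semiring R] [Nontrivial R] (n : ℕ) (b : ℕ → R) (hb : b 0 = 1) :
    (∑ k ∈ Finset.range (n+1), C (b k) * X^(n-k)).natDegree = n ∧
    (∑ k ∈ Finset.range (n+1), C (b k) * X^(n-k)).Monic := by
  have hcoeffn : (∑ k ∈ Finset.range (n+1), C (b k) * X^(n-k)).coeff n = 1 := by
    have := coeff_sum_CXpow n b (Nat.zero_le n)
    simpa [hb] using this
  have hle : (∑ k ∈ Finset.range (n+1), C (b k) * X^(n-k)).natDegree ≤ n := by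
    refine natDegree_sum_le_of_forall_le _ _ fun k hk => ?_
    refine (natDegree_mul_le).trans ?_
    simp only [natDegree_C, natDegree_X_pow, zero_add]
    omega
  have hdeg : (∑ k ∈ Finset.range (n+1), C (b k) * X^(n-k)).natDegree = n :=
    le_antisymm hle (le_natDegree_of_ne_zero (by rw [hcoeffn]; exact one_ne_zero))
  refine ⟨hdeg, ?_⟩
  unfold Monic leadingCoeff
  rw [hdeg, hcoeffn]

/-- Let `f` be a monic irreducible polynomial with integer coefficients of
degree `n ≥ 2`, let `N = f(1)`, let `ℓ` be a prime number, and let `π ∈ ℂ` be a root of `f`.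
Then `N / (ℓ * (1 - π))` is integral over `ℤ` if and only if `ℓ ∣ f'(1)` and `ℓ² ∣ N`. -/
theorem stmt_0 (f : Polynomial ℤ) (hmonic : f.Monic) (hirr : Irreducible f)
    (hdeg : 2 ≤ f.natDegree) (ℓ : ℕ) (hℓ : ℓ.Prime) (π : ℂ)
    (hπ : Polynomial.aeval π f = 0) :
    IsIntegral ℤ (((f.eval 1 : ℤ) : ℂ) / ((ℓ : ℂ) * (1 - π))) ↔
      ((ℓ : ℤ) ∣ f.derivative.eval 1 ∧ (ℓ : ℤ) ^ 2 ∣ f.eval 1) := by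
  set n := f.natDegree with hn
  set N := f.eval 1 with hNdef
  -- N ≠ 0
  have hN : N ≠ 0 := by
    intro h
    have hdvd : (X - C (1:ℤ)) ∣ f := dvd_iff_isRoot.mpr h
    obtain ⟨c, hc⟩ := hdvd
    have hXne : (X - C (1:ℤ)) ≠ 0 := X_sub_C_ne_zero 1
    have hcne : c ≠ 0 := by rintro rfl; simp at hc; exact hmonic.ne_zero hc
    rcases hirr.isUnit_or_isUnit hc with h1 | h2
    · exact (not_isUnit_X_sub_C (1:ℤ)) h1
    · have : c.natDegree = 0 := natDegree_eq_zero_of_isUnit h2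
      have : f.natDegree = 1 := by
        rw [hc, natDegree_mul hXne hcne, natDegree_X_sub_C, this]
      omega
  have hπ1 : π ≠ 1 := by
    intro h
    apply hN
    have : aeval (1:ℂ) f = 0 := h ▸ hπ
    rw [aeval_def, ← eval_map, eval_one_map] at this
    simp only [algebraMap_int_eq, eq_intCast] at this
    exact_mod_cast this
  set β : ℂ := 1 - π with hβdef
  have hβ : β ≠ 0 := sub_ne_zero.mpr (Ne.symm hπ1)
  have hNC : (N:ℂ) ≠ 0 := Int.cast_ne_zero.mpr hN
  have hNQ : (N:ℚ) ≠ 0 := Int.cast_ne_zero.mpr hN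
  have hlZ : (ℓ:ℤ) ≠ 0 := Int.natCast_ne_zero.mpr hℓ.ne_zero
  have hlC : (ℓ:ℂ) ≠ 0 := Nat.cast_ne_zero.mpr hℓ.ne_zero
  have hlQ : (ℓ:ℚ) ≠ 0 := Nat.cast_ne_zero.mpr hℓ.ne_zero
  -- the auxiliary polynomial g
  set g : ℤ[X] := C ((-1:ℤ)^n) * f.comp (1 - X) with hgdef
  have h1X : (1 - X : ℤ[X]) = -(X - C 1) := by simp [neg_sub]
  have h1Xdeg : (1 - X : ℤ[X]).natDegree = 1 := by
    rw [h1X, natDegree_neg, natDegree_X_sub_C]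
  have h1Xlc : (1 - X : ℤ[X]).leadingCoeff = -1 := by
    rw [h1X, leadingCoeff_neg, (monic_X_sub_C 1).leadingCoeff]
  have hu : ((-1:ℤ)^n) ≠ 0 := by positivity
  have hgdeg : g.natDegree = n := by
    rw [hgdef, natDegree_C_mul hu, natDegree_comp, h1Xdeg, mul_one]
  have hg0 : g.coeff 0 = (-1)^n * N := by
    rw [coeff_zero_eq_eval_zero, hgdef, eval_mul, eval_C, eval_comp]
    norm_num
    rfl
  have hg1 : g.coeff 1 = (-1)^(n+1) * f.derivative.eval 1 := by
    have hd : g.derivative = C ((-1:ℤ)^n) * -(derivative f).comp (1 - X) := by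
      rw [hgdef, derivative_C_mul, derivative_comp_one_sub_X]
    have h0 : g.derivative.coeff 0 = g.coeff 1 * (0 + 1) := coeff_derivative g 0
    have h0' : g.derivative.coeff 0 = (-1)^(n+1) * f.derivative.eval 1 := by
      rw [coeff_zero_eq_eval_zero, hd, eval_mul, eval_C, eval_neg, eval_comp]
      norm_num
      ring
    rw [h0'] at h0
    push_cast at h0
    linarith [h0]
  have hgn : g.coeff n = 1 := by
    have : g.leadingCoeff = 1 := by
      rw [hgdef, leadingCoeff_mul, leadingCoeff_C,
        leadingCoeff_comp (by rw [h1Xdeg]; omega), hmonic.leadingCoeff, h1Xlc]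
      simp [← mul_pow]
      rw [← hn, ← mul_pow]
      norm_num
    rw [← hgdeg]
    exact this
  have hgβ : (aeval β g : ℂ) = 0 := by
    rw [hgdef]
    rw [map_mul, aeval_C, aeval_comp]
    have : aeval β (1 - X : ℤ[X]) = π := by
      simp [hβdef]
    rw [this, hπ, mul_zero]
  -- the polynomial P over ℚ satisfied by α
  set b : ℕ → ℚ := fun k => (-1)^n * (g.coeff k : ℚ) * (N:ℚ)^k / ((N:ℚ) * (ℓ:ℚ)^k) with hbdef
  have hb0 : b 0 = 1 := by
    rw [hbdef]
    simp only [pow_zero, mul_one, hg0]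
    push_cast
    rw [← mul_assoc, ← mul_pow]
    field_simp
    exact one_pow _
  set P : ℚ[X] := ∑ k ∈ Finset.range (n+1), C (b k) * X^(n-k) with hPdef
  obtain ⟨hPdeg, hPmonic⟩ := natDegree_sum_CXpow n b hb0
  rw [← hPdef] at hPdeg hPmonic
  set α : ℂ := ((N : ℤ) : ℂ) / ((ℓ : ℂ) * (1 - π)) with hαdef
  have hαβ : α = (N:ℂ) / ((ℓ:ℂ) * β) := rfl
  have hPα : aeval α P = 0 := by
    set c : ℂ := ((-1)^n * (N:ℂ)^n) / ((N:ℂ) * (ℓ:ℂ)^n * β^n) with hcdef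
    have key : aeval α P = c * (aeval β g) := by
      rw [hPdef, map_sum, aeval_eq_sum_range' (lt_of_le_of_lt hgdeg.le (Nat.lt_succ_self n)),
        Finset.mul_sum]
      refine Finset.sum_congr rfl fun k hk => ?_
      have hkn : k ≤ n := by simp at hk; omega
      rw [map_mul, aeval_C, map_pow, aeval_X]
      have hcast : (algebraMap ℚ ℂ) (b k) = (-1)^n * (g.coeff k : ℂ) * (N:ℂ)^k / ((N:ℂ) * (ℓ:ℂ)^k) := by
        rw [hbdef]
        push_cast
        norm_num
      rw [hcast, hcdef, hαβ]
      rw [zsmul_eq_mul]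
      have hβk : β^(n-k) * β^k = β^n := by rw [← pow_add]; congr 1; omega
      have hNk : (N:ℂ)^(n-k) * (N:ℂ)^k = (N:ℂ)^n := by rw [← pow_add]; congr 1; omega
      have hlk : (ℓ:ℂ)^(n-k) * (ℓ:ℂ)^k = (ℓ:ℂ)^n := by rw [← pow_add]; congr 1; omega
      rw [div_pow, mul_pow]
      have hden1 : (N:ℂ) * (ℓ:ℂ)^k * ((ℓ:ℂ)^(n-k) * β^(n-k)) ≠ 0 :=
        mul_ne_zero (mul_ne_zero hNC (pow_ne_zero _ hlC)) (mul_ne_zero (pow_ne_zero _ hlC) (pow_ne_zero _ hβ))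
      have hden2 : (N:ℂ) * (ℓ:ℂ)^n * β^n ≠ 0 :=
        mul_ne_zero (mul_ne_zero hNC (pow_ne_zero _ hlC)) (pow_ne_zero _ hβ)
      rw [div_mul_div_comm, div_mul_eq_mul_div, div_eq_div_iff hden1 hden2, ← hβk, ← hNk, ← hlk]
      ring
    rw [key, hgβ, mul_zero]
  have hbwd : ((ℓ:ℤ) ∣ f.derivative.eval 1 ∧ (ℓ:ℤ)^2 ∣ N) → IsIntegral ℤ α := by
    rintro ⟨hd1, hd2⟩
    have hdvdk : ∀ k, 1 ≤ k → (ℓ:ℤ)^k ∣ (-1)^n * g.coeff k * N^(k-1) := by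
      intro k hk1
      rcases eq_or_lt_of_le hk1 with h | h
      · have hdg1 : (ℓ:ℤ) ∣ g.coeff 1 := by
          rw [hg1]; exact Dvd.dvd.mul_left hd1 _
        rw [← h, pow_one]
        exact ((hdg1.mul_left _).mul_right _)
      · have h2 : ((ℓ:ℤ)^2)^(k-1) ∣ N^(k-1) := pow_dvd_pow_of_dvd hd2 _
        have h3 : (ℓ:ℤ)^k ∣ ((ℓ:ℤ)^2)^(k-1) := by
          rw [← pow_mul]; exact pow_dvd_pow _ (by omega)
        exact Dvd.dvd.mul_left (h3.trans h2) _
    set c : ℕ → ℤ := fun k => if k = 0 then 1 else ((-1)^n * g.coeff k * N^(k-1)) / (ℓ:ℤ)^k with hc2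
    set Q : ℤ[X] := ∑ k ∈ Finset.range (n+1), C (c k) * X^(n-k) with hQdef
    obtain ⟨hQdeg, hQmonic⟩ := natDegree_sum_CXpow n c (by simp [hc2])
    rw [← hQdef] at hQdeg hQmonic
    have hQmap : Q.map (algebraMap ℤ ℚ) = P := by
      rw [hQdef, hPdef, Polynomial.map_sum]
      refine Finset.sum_congr rfl fun k hk => ?_
      rw [Polynomial.map_mul, map_C, Polynomial.map_pow, map_X]
      have hck : ((c k : ℤ) : ℚ) = b k := by
        by_cases hk0 : k = 0
        · subst hk0
          rw [hb0, hc2]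
          simp
        · rw [hc2]
          simp only [if_neg hk0, hbdef]
          rw [Int.cast_div (hdvdk k (by omega)) (by positivity)]
          have hNk : (N:ℚ)^k = (N:ℚ)^(k-1) * N := by
            rw [← pow_succ]; congr 1; omega
          push_cast
          rw [hNk]
          field_simp
      rw [show (algebraMap ℤ ℚ) (c k) = ((c k : ℤ) : ℚ) from rfl, hck]
    refine ⟨Q, hQmonic, ?_⟩
    rw [← aeval_def]
    have := aeval_map_algebraMap ℂ α (Q.map (algebraMap ℤ ℚ))
    rw [hQmap] at this
    rw [← aeval_map_algebraMap ℚ α Q, hQmap, hPα]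
  have hfwd : IsIntegral ℤ α → ((ℓ:ℤ) ∣ f.derivative.eval 1 ∧ (ℓ:ℤ)^2 ∣ N) := by
    intro hint
    have hintQ : IsIntegral ℚ α := hint.tower_top
    have hmmonic : (minpoly ℚ α).Monic := minpoly.monic hintQ
    have hmdvd : minpoly ℚ α ∣ P := minpoly.dvd ℚ α hPα
    -- lower bound on the degree of the minimal polynomial
    set F : ℚ[X] := f.map (algebraMap ℤ ℚ) with hFdef
    have hFmonic : F.Monic := hmonic.map _
    have hFdeg : F.natDegree = n := hmonic.natDegree_map _
    have hFirr : Irreducible F := (hmonic.irreducible_iff_irreducible_map_fraction_map).mp hirr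
    have hFπ : aeval π F = 0 := by rw [hFdef, aeval_map_algebraMap]; exact hπ
    have hminπ : F = minpoly ℚ π := minpoly.eq_of_irreducible_of_monic hFirr hFπ hFmonic
    set m : ℚ[X] := minpoly ℚ α with hmdef
    set d : ℕ := m.natDegree with hddef
    set s : ℚ[X] := ∑ j ∈ Finset.range (d+1),
        C (m.coeff j * ((N:ℚ)/(ℓ:ℚ))^j) * (1 - X)^(d-j) with hsdef
    have haB : α * β = (N:ℂ)/(ℓ:ℂ) := by
      rw [hαβ]
      field_simp
    have hsπ : aeval π s = 0 := by
      have key : aeval π s = (aeval α m) * β^d := by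
        rw [hsdef, map_sum, aeval_eq_sum_range, ← hddef, Finset.sum_mul]
        refine Finset.sum_congr rfl fun j hj => ?_
        have hjd : j ≤ d := by simp at hj; omega
        rw [map_mul, aeval_C, map_pow, map_sub, map_one, aeval_X]
        have h1 : ((1:ℂ) - π) = β := rfl
        have hcast : (algebraMap ℚ ℂ) (m.coeff j * ((N:ℚ)/(ℓ:ℚ))^j)
            = (algebraMap ℚ ℂ) (m.coeff j) * ((N:ℂ)/(ℓ:ℂ))^j := by
          push_cast
          norm_num
        have hβj : β^j * β^(d-j) = β^d := by rw [← pow_add]; congr 1; omega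
        rw [h1, Algebra.smul_def, hcast, ← haB, mul_pow, ← hβj]
        ring
      rw [key, minpoly.aeval, zero_mul]
    have hs1 : s.eval 1 ≠ 0 := by
      have : s.eval 1 = ((N:ℚ)/(ℓ:ℚ))^d := by
        rw [hsdef, eval_finset_sum, Finset.sum_eq_single d]
        · rw [eval_mul, eval_C, eval_pow, eval_sub, eval_one, eval_X]
          have : m.coeff d = 1 := hmmonic.coeff_natDegree
          simp [this]
        · intro j hj hjd
          rw [eval_mul, eval_pow, eval_sub, eval_one, eval_X]
          have : (1:ℚ) - 1 = 0 := by ring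
          rw [this, zero_pow (by simp at hj; omega), mul_zero]
        · intro h
          exact absurd (Finset.mem_range.mpr (Nat.lt_succ_self d)) h
      rw [this]
      positivity
    have hsne : s ≠ 0 := fun h => hs1 (by rw [h, eval_zero])
    have hsdeg : s.natDegree ≤ d := by
      refine natDegree_sum_le_of_forall_le _ _ fun j hj => ?_
      refine natDegree_mul_le.trans ?_
      have h1Q : (1 - X : ℚ[X]).natDegree = 1 := by
        rw [show (1 - X : ℚ[X]) = -(X - C 1) by simp [neg_sub], natDegree_neg, natDegree_X_sub_C]
      rw [natDegree_C, natDegree_pow, h1Q, zero_add, mul_one]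
      omega
    have hlow : n ≤ d := by
      have hdvds : minpoly ℚ π ∣ s := minpoly.dvd ℚ π hsπ
      have := natDegree_le_of_dvd hdvds hsne
      rw [← hminπ, hFdeg] at this
      omega
    have hmP : P = m :=
      eq_of_monic_of_dvd_of_natDegree_le hmmonic hPmonic hmdvd (by rw [hPdeg]; exact hlow)
    have hZ : m = (minpoly ℤ α).map (algebraMap ℤ ℚ) :=
      minpoly.isIntegrallyClosed_eq_field_fractions ℚ ℂ hint
    -- coefficient at degree n - 1
    have hcoeff1 : (((minpoly ℤ α).coeff (n-1) : ℤ) : ℚ) = b 1 := by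
      rw [← coeff_sum_CXpow n b (show 1 ≤ n by omega), ← hPdef, hmP, hZ, coeff_map]
      rfl
    have hdvd1 : (ℓ:ℤ) ∣ f.derivative.eval 1 := by
      set z : ℤ := (minpoly ℤ α).coeff (n-1) with hz
      have hb1 : b 1 = (-1)^n * (g.coeff 1 : ℚ) / (ℓ:ℚ) := by
        rw [hbdef]
        simp only [pow_one]
        field_simp
      have heq : ((z * ℓ : ℤ) : ℚ) = (((-1)^n * g.coeff 1 : ℤ) : ℚ) := by
        push_cast
        rw [show (z:ℚ) = b 1 from hcoeff1, hb1]
        field_simp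
      have heqZ : z * ℓ = (-1)^n * g.coeff 1 := by exact_mod_cast heq
      have hdvdg : (ℓ:ℤ) ∣ (-1)^n * g.coeff 1 := Dvd.intro_left z heqZ
      have h2 : (ℓ:ℤ) ∣ g.coeff 1 := by
        have : (-1:ℤ)^n * ((-1)^n * g.coeff 1) = g.coeff 1 := by
          rw [← mul_assoc, ← mul_pow]
          simp
        rw [← this]
        exact hdvdg.mul_left _
      rw [hg1] at h2
      have : (-1:ℤ)^(n+1) * ((-1)^(n+1) * f.derivative.eval 1) = f.derivative.eval 1 := by
        rw [← mul_assoc, ← mul_pow]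
        simp
      rw [← this]
      exact h2.mul_left _
    -- constant coefficient
    have hcoeff0 : (((minpoly ℤ α).coeff 0 : ℤ) : ℚ) = b n := by
      have h0 : (0:ℕ) = n - n := by omega
      rw [h0, ← coeff_sum_CXpow n b (le_refl n), ← hPdef, hmP, hZ, coeff_map]
      rfl
    have hdvd2 : (ℓ:ℤ)^2 ∣ N := by
      set z : ℤ := (minpoly ℤ α).coeff 0 with hz
      have hbn : b n = (-1)^n * (N:ℚ)^(n-1) / (ℓ:ℚ)^n := by
        rw [hbdef]
        simp only [hgn, Int.cast_one, mul_one]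
        have hNn : (N:ℚ)^n = (N:ℚ)^(n-1) * N := by rw [← pow_succ]; congr 1; omega
        rw [hNn]
        field_simp
      have heq : ((z * ℓ^n : ℤ) : ℚ) = (((-1)^n * N^(n-1) : ℤ) : ℚ) := by
        push_cast
        rw [show (z:ℚ) = b n from hcoeff0, hbn]
        field_simp
      have heqZ : z * ℓ^n = (-1)^n * N^(n-1) := by exact_mod_cast heq
      have hdvdn : (ℓ:ℤ)^n ∣ N^(n-1) := by
        have h1 : (ℓ:ℤ)^n ∣ (-1)^n * N^(n-1) := Dvd.intro_left z heqZ
        have h2 : (-1:ℤ)^n * ((-1)^n * N^(n-1)) = N^(n-1) := by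
          rw [← mul_assoc, ← mul_pow]; simp
        rw [← h2]
        exact h1.mul_left _
      -- now the valuation argument
      have hnat : ℓ^n ∣ N.natAbs^(n-1) := by
        have := Int.natAbs_dvd_natAbs.mpr hdvdn
        simpa [Int.natAbs_pow] using this
      have ha : N.natAbs ≠ 0 := Int.natAbs_ne_zero.mpr hN
      have h2 : n ≤ (N.natAbs^(n-1)).factorization ℓ :=
        (Nat.Prime.pow_dvd_iff_le_factorization hℓ (pow_ne_zero _ ha)).mp hnat
      rw [Nat.factorization_pow] at h2
      simp only [Finsupp.smul_apply, smul_eq_mul] at h2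
      have h3 : 2 ≤ N.natAbs.factorization ℓ := by
        by_contra hcon
        push_neg at hcon
        have : (n-1) * N.natAbs.factorization ℓ ≤ (n-1) * 1 :=
          Nat.mul_le_mul_left _ (by omega)
        omega
      have h4 : ℓ^2 ∣ N.natAbs := (Nat.Prime.pow_dvd_iff_le_factorization hℓ ha).mpr h3
      have h5 : ((ℓ^2 : ℕ) : ℤ) ∣ (N.natAbs : ℤ) := Int.natCast_dvd_natCast.mpr h4
      have h6 : ((N.natAbs : ℤ)) ∣ N := Int.natAbs_dvd.mpr dvd_rfl
      have := h5.trans h6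
      push_cast at this
      exact this
    exact ⟨hdvd1, hdvd2⟩
  exact ⟨hfwd, hbwd⟩
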